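/- For a parameterised IQP circuit U(θ) = ∏_j exp(iθ_j X_{g_j}) on n qubits with input |0⟩, the expectation value ⟨0|U(θ)† Z_a U(θ)|0⟩ equals the expectation over z drawn uniformly from {0,1}^n of cos(∑_j θ_j (-1)^{g_j·z} (1 - (-1)^{g_j·a})). -/

import Mathlib

open Finset Matrix

noncomputable section

abbrev Bits (n : ℕ) := Fin n → Bool

def bdot {n : ℕ} (a z : Bits n) : ℕ := (Finset.univ.filter fun i => a i ∧ z i).card

def wt {n : ℕ} (a : Bits n) : ℕ := (Finset.univ.filter fun i => a i).card

def Zword {n : ℕ} (a : Bits n) : Matrix (Bits n) (Bits n) ℂ :=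
  Matrix.diagonal fun z => (-1 : ℂ) ^ bdot a z

def Xword {n : ℕ} (g : Bits n) : Matrix (Bits n) (Bits n) ℂ :=
  Matrix.of fun x y => if (fun i => xor (y i) (g i)) = x then 1 else 0

def gateX {n : ℕ} (θ : ℝ) (g : Bits n) : Matrix (Bits n) (Bits n) ℂ :=
  NormedSpace.exp ((Complex.I * (θ : ℂ)) • Xword g)

def gateZ {n : ℕ} (θ : ℝ) (g : Bits n) : Matrix (Bits n) (Bits n) ℂ :=
  NormedSpace.exp ((Complex.I * (θ : ℂ)) • Zword g)

def Ucirc {n m : ℕ} (θ : Fin m → ℝ) (g : Fin m → Bits n) : Matrix (Bits n) (Bits n) ℂ :=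
  (List.ofFn fun j => gateX (θ j) (g j)).prod

def zeroBits (n : ℕ) : Bits n := fun _ => false

namespace IQP

variable {n : ℕ}

/-- real-valued character -/
def χ (a z : Bits n) : ℝ := ∏ i, if a i ∧ z i then (-1 : ℝ) else 1

lemma chi_eq_pow (a z : Bits n) : (-1 : ℝ) ^ bdot a z = χ a z := by
  rw [bdot, χ, ← Finset.prod_const, Finset.prod_filter]

lemma chi_comm (a z : Bits n) : χ a z = χ z a := by
  refine Finset.prod_congr rfl fun i _ => ?_
  cases a i <;> cases z i <;> simp

def bxor (x g : Bits n) : Bits n := fun i => xor (x i) (g i)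

lemma bxor_cancel (x g : Bits n) : bxor (bxor x g) g = x :=
  funext fun i => by simp [bxor]

lemma chi_bxor (x g z : Bits n) : χ (bxor x g) z = χ x z * χ g z := by
  rw [χ, χ, χ, ← Finset.prod_mul_distrib]
  refine Finset.prod_congr rfl fun i _ => ?_
  have h : bxor x g i = xor (x i) (g i) := rfl
  rw [h]
  cases x i <;> cases g i <;> cases z i <;> norm_num

lemma chi_zero_left (z : Bits n) : χ (zeroBits n) z = 1 := by
  refine Finset.prod_eq_one fun i _ => ?_
  simp [zeroBits]

lemma chi_sq (a z : Bits n) : χ a z * χ a z = 1 := by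
  rw [χ, ← Finset.prod_mul_distrib]
  refine Finset.prod_eq_one fun i _ => ?_
  by_cases h : (a i : Prop) ∧ (z i : Prop) <;> simp [h]

lemma bxor_eq_zero_iff (x y : Bits n) : bxor x y = zeroBits n ↔ x = y := by
  constructor
  · intro h
    funext i
    have := congrFun h i
    cases hx : x i <;> cases hy : y i <;> simp_all [bxor, zeroBits]
  · rintro rfl
    funext i
    cases x i <;> simp [bxor, zeroBits]

lemma sum_chi (c : Bits n) :
    ∑ z : Bits n, χ c z = if c = zeroBits n then (2 : ℝ) ^ n else 0 := by
  classical
  have h1 : ∑ z : Bits n, χ c z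
      = ∑ z ∈ Fintype.piFinset (fun _ : Fin n => (Finset.univ : Finset Bool)),
          ∏ i, (if c i ∧ z i then (-1 : ℝ) else 1) := by
    rw [Fintype.piFinset_univ]; rfl
  rw [h1, Finset.sum_prod_piFinset (Finset.univ : Finset Bool)
    (fun i b => if c i ∧ b then (-1 : ℝ) else 1)]
  by_cases hc : c = zeroBits n
  · subst hc
    simp [zeroBits]
  · rw [if_neg hc]
    have hex : ∃ i, c i = true := by
      by_contra h
      push_neg at h
      simp only [Bool.not_eq_true] at h
      exact hc (funext fun i => h i)
    obtain ⟨i, hi⟩ := hex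
    refine Finset.prod_eq_zero (Finset.mem_univ i) ?_
    simp [Fintype.sum_bool, hi]

-- matrix layer

def Hmat (n : ℕ) : Matrix (Bits n) (Bits n) ℂ :=
  Matrix.of fun x y => ((χ x y : ℝ) : ℂ)

lemma Hmat_apply (x y : Bits n) : Hmat n x y = ((χ x y : ℝ) : ℂ) := rfl

lemma Hmat_conjTranspose : (Hmat n)ᴴ = Hmat n := by
  ext x y
  simp [Matrix.conjTranspose_apply, Hmat_apply, Complex.conj_ofReal, chi_comm x y]

lemma Hmat_mul_Hmat : Hmat n * Hmat n = ((2 : ℂ) ^ n) • 1 := by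
  ext x y
  simp only [Matrix.mul_apply, Hmat_apply, Matrix.smul_apply, Matrix.one_apply, smul_eq_mul]
  have h1 : ∀ w : Bits n, ((χ x w : ℝ) : ℂ) * ((χ w y : ℝ) : ℂ) = ((χ (bxor x y) w : ℝ) : ℂ) := by
    intro w
    rw [chi_comm w y, chi_bxor]; push_cast; ring
  rw [Finset.sum_congr rfl fun w _ => h1 w]
  have : ∑ w : Bits n, ((χ (bxor x y) w : ℝ) : ℂ)
      = (((∑ w : Bits n, χ (bxor x y) w : ℝ)) : ℂ) := by push_cast; rfl
  rw [this, sum_chi]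
  by_cases h : x = y
  · rw [if_pos ((bxor_eq_zero_iff x y).2 h)]; simp [h]
  · rw [if_neg (fun hh => h ((bxor_eq_zero_iff x y).1 hh))]; simp [h]

lemma bxor_eq_iff (w a x : Bits n) : bxor w a = x ↔ w = bxor x a := by
  constructor
  · rintro rfl; rw [bxor_cancel]
  · rintro rfl; rw [bxor_cancel]

lemma Xword_mul (g : Bits n) (P : Matrix (Bits n) (Bits n) ℂ) (x y : Bits n) :
    (Xword g * P) x y = P (bxor x g) y := by
  simp only [Matrix.mul_apply, Xword, Matrix.of_apply]
  have h : ∀ w : Bits n, ((fun i => xor (w i) (g i)) = x) ↔ (w = bxor x g) := fun w =>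
    bxor_eq_iff w g x
  simp only [ite_mul, one_mul, zero_mul]
  rw [Finset.sum_congr rfl fun w _ => by rw [if_congr (h w) rfl rfl]]
  simp

lemma Hmat_mul_Xword (g : Bits n) :
    Hmat n * Xword g = Matrix.diagonal (fun z => ((χ g z : ℝ) : ℂ)) * Hmat n := by
  ext x y
  rw [Matrix.diagonal_mul]
  simp only [Matrix.mul_apply, Xword, Matrix.of_apply, Hmat_apply, mul_ite, mul_one, mul_zero]
  have h : ∀ w : Bits n, ((fun i => xor (y i) (g i)) = w) ↔ (w = bxor y g) := by
    intro w; constructor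
    · rintro rfl; rfl
    · rintro rfl; rfl
  rw [Finset.sum_congr rfl fun w _ => by rw [if_congr (h w) rfl rfl]]
  rw [Finset.sum_ite_eq' Finset.univ (bxor y g) (fun w => ((χ x w : ℝ) : ℂ)), if_pos (Finset.mem_univ _)]
  rw [chi_comm x (bxor y g), chi_bxor, chi_comm y x, chi_comm g x]
  push_cast; ring

def Hunit (n : ℕ) : (Matrix (Bits n) (Bits n) ℂ)ˣ where
  val := Hmat n
  inv := ((((2 : ℝ) ^ n)⁻¹ : ℝ) : ℂ) • Hmat n
  val_inv := by
    rw [Matrix.mul_smul, Hmat_mul_Hmat, smul_smul]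
    norm_num
  inv_val := by
    rw [Matrix.smul_mul, Hmat_mul_Hmat, smul_smul]
    norm_num

lemma Hunit_coe : (Hunit n).val = Hmat n := rfl

lemma Hunit_inv_coe :
    ((Hunit n)⁻¹).val = ((((2 : ℝ) ^ n)⁻¹ : ℝ) : ℂ) • Hmat n := rfl

lemma Xword_eq_conj (g : Bits n) :
    Xword g = ((Hunit n)⁻¹).val * ((Matrix.diagonal (fun z => ((χ g z : ℝ) : ℂ))) * (Hunit n).val) := by
  rw [Hunit_coe, ← Hmat_mul_Xword, ← Hunit_coe, ← mul_assoc, Units.inv_mul, one_mul]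

lemma gateX_eq (θ : ℝ) (g : Bits n) :
    gateX θ g
      = ((Hunit n)⁻¹).val *
          Matrix.diagonal (fun z => Complex.exp (Complex.I * (θ : ℂ) * ((χ g z : ℝ) : ℂ))) *
          (Hunit n).val := by
  rw [gateX, Xword_eq_conj, ← mul_assoc]
  have h1 : (Complex.I * (θ : ℂ)) • (((Hunit n)⁻¹).val *
        Matrix.diagonal (fun z => ((χ g z : ℝ) : ℂ)) * (Hunit n).val)
      = ((Hunit n)⁻¹).val *
          ((Complex.I * (θ : ℂ)) • Matrix.diagonal (fun z => ((χ g z : ℝ) : ℂ))) *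
          (Hunit n).val := by
    rw [Matrix.mul_smul, Matrix.smul_mul]
  rw [h1, Matrix.exp_units_conj' (Hunit n)]
  have h2 : (Complex.I * (θ : ℂ)) • Matrix.diagonal (fun z => ((χ g z : ℝ) : ℂ))
      = Matrix.diagonal (fun z => Complex.I * (θ : ℂ) * ((χ g z : ℝ) : ℂ)) := by
    rw [← Matrix.diagonal_smul]
    rfl
  rw [h2, Matrix.exp_diagonal, Pi.exp_def]
  congr 2
  funext z
  rw [← Complex.exp_eq_exp_ℂ]

lemma prod_conj (u : (Matrix (Bits n) (Bits n) ℂ)ˣ) :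
    ∀ {m : ℕ} (D : Fin m → Matrix (Bits n) (Bits n) ℂ),
      (List.ofFn fun j => u⁻¹.val * D j * u.val).prod = u⁻¹.val * (List.ofFn D).prod * u.val
  | 0, D => by
    simp only [List.ofFn_zero, List.prod_nil, mul_one, Units.inv_mul]
  | (m + 1), D => by
    rw [List.ofFn_succ, List.ofFn_succ, List.prod_cons, List.prod_cons,
      prod_conj u (fun j => D j.succ)]
    simp only [mul_assoc, Units.mul_inv_cancel_left]

lemma prod_diagonal :
    ∀ {m : ℕ} (d : Fin m → Bits n → ℂ),
      (List.ofFn fun j => Matrix.diagonal (d j)).prod = Matrix.diagonal (fun z => ∏ j, d j z)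
  | 0, d => by simp
  | (m + 1), d => by
    rw [List.ofFn_succ, List.prod_cons, prod_diagonal (fun j => d j.succ),
      Matrix.diagonal_mul_diagonal]
    exact congrArg Matrix.diagonal (funext fun z => (Fin.prod_univ_succ fun j => d j z).symm)

lemma Ucirc_eq {m : ℕ} (θ : Fin m → ℝ) (g : Fin m → Bits n) :
    Ucirc θ g
      = ((Hunit n)⁻¹).val *
          Matrix.diagonal
            (fun z => Complex.exp (Complex.I * ((∑ j, θ j * χ (g j) z : ℝ) : ℂ))) *
          (Hunit n).val := by
  have h1 : (List.ofFn fun j => gateX (θ j) (g j))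
      = List.ofFn fun j => ((Hunit n)⁻¹).val *
          Matrix.diagonal
            (fun z => Complex.exp (Complex.I * (θ j : ℂ) * ((χ (g j) z : ℝ) : ℂ))) *
          (Hunit n).val := by
    congr 1
    funext j
    exact gateX_eq (θ j) (g j)
  rw [Ucirc, h1, prod_conj, prod_diagonal]
  have h2 : (fun z => ∏ j, Complex.exp (Complex.I * (θ j : ℂ) * ((χ (g j) z : ℝ) : ℂ)))
      = fun z : Bits n => Complex.exp (Complex.I * ((∑ j, θ j * χ (g j) z : ℝ) : ℂ)) := by
    funext z
    rw [← Complex.exp_sum]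
    congr 1
    push_cast
    rw [Finset.mul_sum]
    exact Finset.sum_congr rfl fun j _ => by ring
  rw [h2]

lemma chi_zero_right (x : Bits n) : χ x (zeroBits n) = 1 := by
  rw [chi_comm, chi_zero_left]

lemma chi_bxor_right (c x a : Bits n) : χ c (bxor x a) = χ c x * χ c a := by
  rw [chi_comm, chi_bxor, chi_comm x c, chi_comm a c]

lemma Zword_eq (a : Bits n) : Zword a = Matrix.diagonal (fun z => ((χ a z : ℝ) : ℂ)) := by
  rw [Zword]
  exact congrArg Matrix.diagonal (funext fun z => by rw [← chi_eq_pow]; push_cast; ring)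

lemma sum_exp_cos (f : Bits n → ℝ) (a : Bits n) (hf : ∀ x, f (bxor x a) = - f x) :
    ∑ x : Bits n, Complex.exp (Complex.I * ((f x : ℝ) : ℂ))
      = ∑ x : Bits n, ((Real.cos (f x) : ℝ) : ℂ) := by
  have hbij : Function.Bijective (fun x : Bits n => bxor x a) :=
    Function.bijective_iff_has_inverse.2
      ⟨fun x => bxor x a, fun x => bxor_cancel x a, fun x => bxor_cancel x a⟩
  have h2 : ∑ x : Bits n, Complex.exp (Complex.I * ((f x : ℝ) : ℂ))
      = ∑ x : Bits n, Complex.exp (-(Complex.I * ((f x : ℝ) : ℂ))) := by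
    rw [← Function.Bijective.sum_comp hbij (fun x => Complex.exp (Complex.I * ((f x : ℝ) : ℂ)))]
    refine Finset.sum_congr rfl fun x _ => ?_
    show Complex.exp (Complex.I * ((f (bxor x a) : ℝ) : ℂ)) = _
    rw [hf]
    congr 1
    push_cast
    ring
  have h3 : ∀ x : Bits n, Complex.exp (Complex.I * ((f x : ℝ) : ℂ))
        + Complex.exp (-(Complex.I * ((f x : ℝ) : ℂ)))
      = 2 * ((Real.cos (f x) : ℝ) : ℂ) := by
    intro x
    rw [mul_comm Complex.I, ← neg_mul, Complex.exp_mul_I, Complex.exp_mul_I,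
      Complex.cos_neg, Complex.sin_neg, Complex.ofReal_cos]
    ring
  have h4 : (2 : ℂ) * ∑ x : Bits n, Complex.exp (Complex.I * ((f x : ℝ) : ℂ))
      = 2 * ∑ x : Bits n, ((Real.cos (f x) : ℝ) : ℂ) := by
    calc (2 : ℂ) * ∑ x : Bits n, Complex.exp (Complex.I * ((f x : ℝ) : ℂ))
        = (∑ x : Bits n, Complex.exp (Complex.I * ((f x : ℝ) : ℂ)))
          + ∑ x : Bits n, Complex.exp (-(Complex.I * ((f x : ℝ) : ℂ))) := by
          rw [two_mul]; rw [← h2]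
      _ = ∑ x : Bits n, (Complex.exp (Complex.I * ((f x : ℝ) : ℂ))
            + Complex.exp (-(Complex.I * ((f x : ℝ) : ℂ)))) := Finset.sum_add_distrib.symm
      _ = ∑ x : Bits n, 2 * ((Real.cos (f x) : ℝ) : ℂ) :=
          Finset.sum_congr rfl fun x _ => h3 x
      _ = 2 * ∑ x : Bits n, ((Real.cos (f x) : ℝ) : ℂ) := (Finset.mul_sum _ _ _).symm
  exact mul_left_cancel₀ two_ne_zero h4

end IQP

open IQP

/-- for a parameterised IQP circuit with input |0⟩, the expectation
⟨0|U(θ)† Z_a U(θ)|0⟩ equals the uniform average over z ∈ {0,1}ⁿ of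
cos(∑ⱼ θⱼ (-1)^{gⱼ·z} (1 - (-1)^{gⱼ·a})). -/
theorem iqp_expval_eq_uniform_average {n m : ℕ} (θ : Fin m → ℝ) (g : Fin m → Bits n)
    (a : Bits n) :
    ((Ucirc θ g)ᴴ * Zword a * Ucirc θ g) (zeroBits n) (zeroBits n)
      = (((1 / 2 ^ n : ℝ) * ∑ z : Bits n,
          Real.cos (∑ j, θ j * (-1 : ℝ) ^ bdot (g j) z *
            (1 - (-1 : ℝ) ^ bdot (g j) a)) : ℝ) : ℂ) := by
  classical
  set W : ℂ := ((((2 : ℝ) ^ n)⁻¹ : ℝ) : ℂ) with hWdef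
  set φ : Bits n → ℝ := fun z => ∑ j, θ j * χ (g j) z with hφ
  -- circuit diagonalization
  have hU : Ucirc θ g
      = ((Hunit n)⁻¹).val *
          Matrix.diagonal (fun z => Complex.exp (Complex.I * ((φ z : ℝ) : ℂ))) *
          (Hunit n).val := Ucirc_eq θ g
  -- conjugate transpose
  have hWstar : star W = W := Complex.conj_ofReal _
  have hconj : (Ucirc θ g)ᴴ
      = (Hunit n).val *
          Matrix.diagonal (fun z => Complex.exp (-(Complex.I * ((φ z : ℝ) : ℂ)))) *
          ((Hunit n)⁻¹).val := by
    rw [hU, Matrix.conjTranspose_mul, Matrix.conjTranspose_mul,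
      Matrix.diagonal_conjTranspose]
    rw [Hunit_inv_coe, Hunit_coe, Matrix.conjTranspose_smul, Hmat_conjTranspose, hWstar]
    have hstar : (star fun z => Complex.exp (Complex.I * ((φ z : ℝ) : ℂ)))
        = fun z : Bits n => Complex.exp (-(Complex.I * ((φ z : ℝ) : ℂ))) := by
      funext z
      show star (Complex.exp (Complex.I * ((φ z : ℝ) : ℂ))) = _
      rw [Complex.star_def, ← Complex.exp_conj, _root_.map_mul, Complex.conj_I,
        Complex.conj_ofReal, neg_mul]
    rw [hstar, ← mul_assoc]
  -- key conjugation identity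
  have hHDH : ∀ R : Matrix (Bits n) (Bits n) ℂ,
      Hmat n * (Matrix.diagonal (fun z => ((χ a z : ℝ) : ℂ)) * (Hmat n * R))
        = ((2 : ℂ) ^ n) • (Xword a * R) := by
    intro R
    rw [← mul_assoc, ← mul_assoc, mul_assoc (Hmat n), ← Hmat_mul_Xword, ← mul_assoc,
      Hmat_mul_Hmat, Matrix.smul_mul, one_mul, Matrix.smul_mul]
  have hsc : W * W * (2 : ℂ) ^ n = W := by
    rw [hWdef]
    push_cast
    have h2 : ((2 : ℂ) ^ n) ≠ 0 := pow_ne_zero _ two_ne_zero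
    field_simp
  have hmain : (Ucirc θ g)ᴴ * Zword a * Ucirc θ g
      = W • (Hmat n *
          (Matrix.diagonal (fun z => Complex.exp (-(Complex.I * ((φ z : ℝ) : ℂ)))) *
            (Xword a *
              (Matrix.diagonal (fun z => Complex.exp (Complex.I * ((φ z : ℝ) : ℂ))) *
                Hmat n)))) := by
    rw [hconj, hU, Zword_eq, Hunit_inv_coe, Hunit_coe]
    simp only [Matrix.smul_mul, Matrix.mul_smul, smul_smul, mul_assoc]
    rw [hHDH (Matrix.diagonal (fun z => Complex.exp (Complex.I * ((φ z : ℝ) : ℂ))) * Hmat n)]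
    simp only [Matrix.mul_smul, smul_smul]
    rw [show ((((2:ℝ)^n)⁻¹ : ℝ) : ℂ) * ((((2:ℝ)^n)⁻¹ : ℝ) : ℂ) * (2 : ℂ) ^ n = W from hsc]
  rw [hmain, Matrix.smul_apply, smul_eq_mul]
  have hentry : (Hmat n *
        (Matrix.diagonal (fun z => Complex.exp (-(Complex.I * ((φ z : ℝ) : ℂ)))) *
          (Xword a *
            (Matrix.diagonal (fun z => Complex.exp (Complex.I * ((φ z : ℝ) : ℂ))) *
              Hmat n)))) (zeroBits n) (zeroBits n)
      = ∑ x : Bits n, Complex.exp (Complex.I * ((φ (bxor x a) - φ x : ℝ) : ℂ)) := by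
    rw [Matrix.mul_apply]
    refine Finset.sum_congr rfl fun x _ => ?_
    rw [Matrix.diagonal_mul, Xword_mul, Matrix.diagonal_mul, Hmat_apply, Hmat_apply,
      chi_zero_left, chi_zero_right]
    rw [Complex.ofReal_one, one_mul, mul_one, ← Complex.exp_add]
    congr 1
    push_cast
    ring
  rw [hentry,
    sum_exp_cos (fun x => φ (bxor x a) - φ x) a (fun x => by
      show φ (bxor (bxor x a) a) - φ (bxor x a) = -(φ (bxor x a) - φ x)
      rw [bxor_cancel]; ring)]
  have hA : ∀ z : Bits n,
      (∑ j, θ j * (-1 : ℝ) ^ bdot (g j) z * (1 - (-1 : ℝ) ^ bdot (g j) a))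
        = -(φ (bxor z a) - φ z) := by
    intro z
    simp only [hφ, chi_eq_pow, chi_bxor_right]
    rw [neg_sub, ← Finset.sum_sub_distrib]
    refine Finset.sum_congr rfl fun j _ => ?_
    ring
  have hcos : (∑ z : Bits n, Real.cos (∑ j, θ j * (-1 : ℝ) ^ bdot (g j) z *
        (1 - (-1 : ℝ) ^ bdot (g j) a)))
      = ∑ x : Bits n, Real.cos (φ (bxor x a) - φ x) := by
    refine Finset.sum_congr rfl fun z _ => ?_
    rw [hA z, Real.cos_neg]
  have hR : ((1 / 2 ^ n : ℝ) * ∑ z : Bits n, Real.cos (∑ j, θ j * (-1 : ℝ) ^ bdot (g j) z *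
        (1 - (-1 : ℝ) ^ bdot (g j) a)))
      = (1 / 2 ^ n : ℝ) * ∑ x : Bits n, Real.cos (φ (bxor x a) - φ x) := by rw [hcos]
  rw [hR, hWdef]
  push_cast
  ring
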